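/- Let Σ be a signed graph whose ground graph contains a unique clique of maximum size, and suppose the signed subgraph induced on that clique is not isomorphic (as a signed graph) to its negation. If Π is any rooted signed graph, then the rooted product Σ[Π] is not isomorphic to −Σ[Π], provided the clique size exceeds the clique number of Π. -/

import Mathlib

open Polynomial Matrix

/-- If the ground of Σ has a unique maximum clique on which the induced signed
graph is not isomorphic to its negation, and the clique size exceeds the clique
number of Π, then the rooted product Σ[Π] is not isomorphic to −Σ[Π]. -/
theorem rooted_product_not_sign_symmetric (n m : ℕ)
    (G : SimpleGraph (Fin n)) (σ : Fin n → Fin n → ℝ)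
    (H : SimpleGraph (Fin m)) (τ : Fin m → Fin m → ℝ) (r : Fin m)
    (c : ℕ) (S : Finset (Fin n))
    (hSclique : G.IsClique (S : Set (Fin n))) (hScard : S.card = c)
    (hmax : ∀ T : Finset (Fin n), G.IsClique (T : Set (Fin n)) → T.card ≤ c)
    (huniq : ∀ T : Finset (Fin n), G.IsClique (T : Set (Fin n)) → T.card = c → T = S)
    (hH : ∀ T : Finset (Fin m), H.IsClique (T : Set (Fin m)) → T.card < c)
    (hni : ¬ ∃ φ : {x // x ∈ S} ≃ {x // x ∈ S},
      ∀ a b : {x // x ∈ S},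
        (G.Adj a.1 b.1 ↔ G.Adj (φ a).1 (φ b).1) ∧
        (G.Adj a.1 b.1 → σ a.1 b.1 = -(σ (φ a).1 (φ b).1)))
    (RAdj : Fin n × Fin m → Fin n × Fin m → Prop)
    (hRAdj : ∀ x y, RAdj x y ↔
      ((x.1 = y.1 ∧ H.Adj x.2 y.2) ∨ (x.2 = r ∧ y.2 = r ∧ G.Adj x.1 y.1)))
    (Rσ : Fin n × Fin m → Fin n × Fin m → ℝ)
    (hRσ : ∀ x y, Rσ x y = if x.1 = y.1 then τ x.2 y.2 else σ x.1 y.1) :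
    ¬ ∃ ψ : Fin n × Fin m ≃ Fin n × Fin m,
      ∀ x y, (RAdj x y ↔ RAdj (ψ x) (ψ y)) ∧
        (RAdj x y → Rσ x y = -(Rσ (ψ x) (ψ y))) := by
  rintro ⟨ψ, hψ⟩
  have hc2 : 2 ≤ c := by
    have h1 := hH {r} (by
      simp only [Finset.coe_singleton]
      exact Set.pairwise_singleton r H.Adj)
    simp at h1; omega
  have hcard2 : 2 ≤ S.card := by rw [hScard]; exact hc2
  have hadj : ∀ a ∈ S, ∀ b ∈ S, a ≠ b → RAdj (ψ (a, r)) (ψ (b, r)) := by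
    intro a ha b hb hab
    exact (hψ (a, r) (b, r)).1.mp ((hRAdj _ _).2 (Or.inr ⟨rfl, rfl, hSclique ha hb hab⟩))
  have hfst : ∀ a ∈ S, ∀ b ∈ S, a ≠ b → (ψ (a, r)).1 ≠ (ψ (b, r)).1 := by
    intro a ha b hb hab heq
    have hall : ∀ s ∈ S, (ψ (s, r)).1 = (ψ (a, r)).1 := by
      intro s hs
      by_contra hne
      have hsa : s ≠ a := fun h => hne (by rw [h])
      have hsb : s ≠ b := fun h => hne (by rw [h, ← heq])
      rcases (hRAdj _ _).1 (hadj s hs a ha hsa) with ⟨h, _⟩ | ⟨hs2, ha2, _⟩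
      · exact hne h
      · rcases (hRAdj _ _).1 (hadj s hs b hb hsb) with ⟨h, _⟩ | ⟨_, hb2, _⟩
        · exact hne (h.trans heq.symm)
        · have hab2 : ψ (a, r) = ψ (b, r) := Prod.ext heq (ha2.trans hb2.symm)
          exact hab (congrArg Prod.fst (ψ.injective hab2))
    have hTclique : H.IsClique ↑(S.image (fun s => (ψ (s, r)).2)) := by
      intro x hx y hy hxy
      simp only [Finset.coe_image, Set.mem_image, Finset.mem_coe] at hx hy
      obtain ⟨s, hs, rfl⟩ := hx
      obtain ⟨t, ht, rfl⟩ := hy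
      have hst : s ≠ t := fun h => hxy (by rw [h])
      rcases (hRAdj _ _).1 (hadj s hs t ht hst) with ⟨_, h⟩ | ⟨_, _, h⟩
      · exact h
      · exact absurd ((hall s hs).trans (hall t ht).symm) h.ne
    have hTcard : (S.image (fun s => (ψ (s, r)).2)).card = c := by
      rw [Finset.card_image_of_injOn, hScard]
      intro s hs t ht h
      have hst : ψ (s, r) = ψ (t, r) :=
        Prod.ext ((hall s hs).trans (hall t ht).symm) h
      exact congrArg Prod.fst (ψ.injective hst)
    exact (hH _ hTclique).ne hTcard
  have hsnd : ∀ a ∈ S, (ψ (a, r)).2 = r := by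
    intro a ha
    obtain ⟨b, hb, hba⟩ := Finset.exists_mem_ne (by omega : 1 < S.card) a
    rcases (hRAdj _ _).1 (hadj a ha b hb (Ne.symm hba)) with ⟨h, _⟩ | ⟨h, _, _⟩
    · exact absurd h (hfst a ha b hb (Ne.symm hba))
    · exact h
  have hmemS : ∀ a ∈ S, (ψ (a, r)).1 ∈ S := by
    have hTclique : G.IsClique ↑(S.image (fun s => (ψ (s, r)).1)) := by
      intro x hx y hy hxy
      simp only [Finset.coe_image, Set.mem_image, Finset.mem_coe] at hx hy
      obtain ⟨s, hs, rfl⟩ := hx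
      obtain ⟨t, ht, rfl⟩ := hy
      have hst : s ≠ t := fun h => hxy (by rw [h])
      rcases (hRAdj _ _).1 (hadj s hs t ht hst) with ⟨h, _⟩ | ⟨_, _, h⟩
      · exact absurd h (hfst s hs t ht hst)
      · exact h
    have hTcard : (S.image (fun s => (ψ (s, r)).1)).card = c := by
      rw [Finset.card_image_of_injOn, hScard]
      intro s hs t ht h
      by_contra hne
      exact hfst s hs t ht hne h
    have hTS := huniq _ hTclique hTcard
    intro a ha
    rw [← hTS]
    exact Finset.mem_image_of_mem _ ha
  let f : {x // x ∈ S} → {x // x ∈ S} := fun a => ⟨(ψ (a.1, r)).1, hmemS a.1 a.2⟩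
  have hfinj : Function.Injective f := by
    intro a b h
    have h1 : (ψ (a.1, r)).1 = (ψ (b.1, r)).1 := congrArg Subtype.val h
    by_contra hne
    exact hfst a.1 a.2 b.1 b.2 (fun hh => hne (Subtype.ext hh)) h1
  let φ : {x // x ∈ S} ≃ {x // x ∈ S} :=
    Equiv.ofBijective f (Finite.injective_iff_bijective.mp hfinj)
  have hψa : ∀ a : {x // x ∈ S}, ψ (a.1, r) = ((φ a).1, r) := fun a =>
    Prod.ext rfl (hsnd a.1 a.2)
  have hφinj : ∀ a b : {x // x ∈ S}, a ≠ b → (φ a).1 ≠ (φ b).1 := by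
    intro a b hne h
    exact hne (φ.injective (Subtype.ext h))
  have fwd : ∀ a b : {x // x ∈ S}, G.Adj a.1 b.1 → G.Adj (φ a).1 (φ b).1 := by
    intro a b hab
    have hne : a ≠ b := fun h => hab.ne (congrArg Subtype.val h)
    have h1 : RAdj (ψ (a.1, r)) (ψ (b.1, r)) := hadj a.1 a.2 b.1 b.2 hab.ne
    rw [hψa a, hψa b] at h1
    rcases (hRAdj _ _).1 h1 with ⟨_, h⟩ | ⟨_, _, h⟩
    · exact absurd h H.irrefl
    · exact h
  have bwd : ∀ a b : {x // x ∈ S}, G.Adj (φ a).1 (φ b).1 → G.Adj a.1 b.1 := by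
    intro a b hab
    have h1 : RAdj (ψ (a.1, r)) (ψ (b.1, r)) := by
      rw [hψa a, hψa b]
      exact (hRAdj _ _).2 (Or.inr ⟨rfl, rfl, hab⟩)
    have h2 : RAdj (a.1, r) (b.1, r) := (hψ _ _).1.mpr h1
    rcases (hRAdj _ _).1 h2 with ⟨_, h⟩ | ⟨_, _, h⟩
    · exact absurd h H.irrefl
    · exact h
  have sgn : ∀ a b : {x // x ∈ S}, G.Adj a.1 b.1 → σ a.1 b.1 = -(σ (φ a).1 (φ b).1) := by
    intro a b hab
    have hr : RAdj (a.1, r) (b.1, r) := (hRAdj _ _).2 (Or.inr ⟨rfl, rfl, hab⟩)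
    have h1 := (hψ (a.1, r) (b.1, r)).2 hr
    rw [hψa a, hψa b, hRσ, hRσ] at h1
    have hne1 : ((a.1, r) : Fin n × Fin m).1 ≠ ((b.1, r) : Fin n × Fin m).1 := hab.ne
    have hne2 : (((φ a).1, r) : Fin n × Fin m).1 ≠ (((φ b).1, r) : Fin n × Fin m).1 :=
      (fwd a b hab).ne
    rw [if_neg hne1, if_neg hne2] at h1
    exact h1
  exact hni ⟨φ, fun a b => ⟨⟨fwd a b, bwd a b⟩, sgn a b⟩⟩
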